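/- Under the hypotheses α = θ'/G, β = λh⁻¹ sin θ, h' = -λG cos θ (co-closed case γ = 0), with sin θ nowhere zero and α + β nowhere zero, one has (cot θ)·θ' = (β'/β)·(α/(α+β)), and consequently sin θ(r) = sin θ(0) · exp(∫₀ʳ (β'/β)·(α/(α+β)) ds). -/

import Mathlib

theorem sin_theta_formula (lam : ℝ) (hlam : lam ≠ 0)
    (θ h G α β : ℝ → ℝ)
    (hθ : ContDiff ℝ 2 θ) (hh : ContDiff ℝ 2 h) (hGd : ContDiff ℝ 1 G)
    (hG0 : ∀ r, G r > 0) (hh0 : ∀ r, h r ≠ 0)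
    (hsin : ∀ r, Real.sin (θ r) ≠ 0)
    (hαβ : ∀ r, α r + β r ≠ 0)
    (hα : ∀ r, α r = deriv θ r / G r)
    (hβ : ∀ r, β r = lam * (h r)⁻¹ * Real.sin (θ r))
    (hhode : ∀ r, deriv h r = -lam * G r * Real.cos (θ r)) :
    (∀ r, (Real.cos (θ r) / Real.sin (θ r)) * deriv θ r =
      (deriv β r / β r) * (α r / (α r + β r))) ∧
    (∀ r, Real.sin (θ r) = Real.sin (θ 0) *
      Real.exp (∫ s in (0:ℝ)..r, (deriv β s / β s) * (α s / (α s + β s)))) := by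
  have hθd : Differentiable ℝ θ := hθ.differentiable two_ne_zero
  have hθ' : ∀ r, HasDerivAt θ (deriv θ r) r := fun r => (hθd r).hasDerivAt
  have hhd : Differentiable ℝ h := hh.differentiable two_ne_zero
  have hβfun : β = fun r => lam * (h r)⁻¹ * Real.sin (θ r) := funext hβ
  have hβ' : ∀ r, HasDerivAt β
      (lam * (-(deriv h r) / (h r) ^ 2) * Real.sin (θ r)
        + lam * (h r)⁻¹ * (Real.cos (θ r) * deriv θ r)) r := by
    intro r
    rw [hβfun]
    exact ((((hhd r).hasDerivAt.inv (hh0 r)).const_mul lam).mul ((hθ' r).sin))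
  have key : ∀ r, (Real.cos (θ r) / Real.sin (θ r)) * deriv θ r =
      (deriv β r / β r) * (α r / (α r + β r)) := by
    intro r
    have hne : deriv θ r / G r + lam * (h r)⁻¹ * Real.sin (θ r) ≠ 0 := by
      rw [← hα r, ← hβ r]; exact hαβ r
    have hGne : G r ≠ 0 := (hG0 r).ne'
    have hhne : h r ≠ 0 := hh0 r
    have e1 : lam * (-(-lam * G r * Real.cos (θ r)) / (h r) ^ 2) * Real.sin (θ r)
        + lam * (h r)⁻¹ * (Real.cos (θ r) * deriv θ r)
        = Real.cos (θ r) * (lam * (h r)⁻¹) *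
          (G r * (deriv θ r / G r + lam * (h r)⁻¹ * Real.sin (θ r))) := by
      field_simp
      ring
    rw [(hβ' r).deriv, hhode r, e1, hβ r, hα r]
    obtain ⟨A, hA, hAne⟩ : ∃ A, deriv θ r / G r + lam * (h r)⁻¹ * Real.sin (θ r) = A
        ∧ A ≠ 0 := ⟨_, rfl, hne⟩
    rw [hA]
    field_simp
  refine ⟨key, ?_⟩
  -- continuity of the integrand
  have hderivθc : Continuous (deriv θ) := hθ.continuous_deriv one_le_two
  set q : ℝ → ℝ := fun r => Real.cos (θ r) / Real.sin (θ r) * deriv θ r with hq_def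
  have hqc : Continuous q := by
    apply Continuous.mul _ hderivθc
    exact (Real.continuous_cos.comp hθd.continuous).div
      (Real.continuous_sin.comp hθd.continuous) hsin
  set I : ℝ → ℝ := fun r => ∫ s in (0:ℝ)..r, q s with hI_def
  have hI' : ∀ r, HasDerivAt I (q r) r := by
    intro r
    exact intervalIntegral.integral_hasDerivAt_right
      (hqc.intervalIntegrable 0 r)
      (hqc.stronglyMeasurableAtFilter _ _)
      hqc.continuousAt
  set F : ℝ → ℝ := fun r => Real.sin (θ r) * Real.exp (-(I r)) with hF_def
  have hF' : ∀ r, HasDerivAt F 0 r := by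
    intro r
    have h1 : HasDerivAt (fun r => Real.sin (θ r)) (Real.cos (θ r) * deriv θ r) r :=
      (hθ' r).sin
    have h2 : HasDerivAt (fun r => Real.exp (-(I r))) (Real.exp (-(I r)) * -(q r)) r :=
      ((hI' r).neg).exp
    have this : HasDerivAt (fun r => Real.sin (θ r) * Real.exp (-(I r))) _ r := h1.mul h2
    convert this using 1
    have hs := hsin r
    show (0:ℝ) = Real.cos (θ r) * deriv θ r * Real.exp (-(I r)) +
      Real.sin (θ r) * (Real.exp (-(I r)) * -(Real.cos (θ r) / Real.sin (θ r) * deriv θ r))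
    field_simp
    ring
  have hFconst : ∀ r, F r = F 0 := by
    intro r
    have : ∀ x, deriv F x = 0 := fun x => (hF' x).deriv
    exact is_const_of_deriv_eq_zero (fun x => (hF' x).differentiableAt) this r 0
  intro r
  have h0 : I 0 = 0 := by simp [hI_def]
  have hFr := hFconst r
  simp only [hF_def, h0, neg_zero, Real.exp_zero, mul_one] at hFr
  have hIr : (∫ s in (0:ℝ)..r, (deriv β s / β s) * (α s / (α s + β s))) = I r := by
    simp only [hI_def]
    congr 1
    funext s
    exact (key s).symm
  rw [hIr, ← hFr, mul_assoc, ← Real.exp_add]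
  simp
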